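/- arXiv:2604.22663 — 4 statements merged into one kernel-verified Lean document; each statement's English description precedes it below -/
import Mathlib

section
/- Let H be a hypergraph with edge set E, let q : 2^E → ℝ≥0 be symmetric (q(F) = q(E∖F)), let ρ be a probability measure on E with ρ({e}) ≤ 1/2 for every e ∈ E, and let φ : [0,1/2] → ℝ≥0 be nondecreasing. If q(F) ≥ φ(min{ρ(F), ρ(E∖F)}) for all F ⊆ E, then the branchwidth B_H(q) satisfies B_H(q) ≥ φ(1/3), provided |E| ≥ 2. -/
open scoped Classical

noncomputable section

/-- A branch decomposition of the edge set `E` (here an abstract finite type) of a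
hypergraph: a subcubic tree `T` together with a map `δ` that is a bijection from
the leaves (degree-≤-1 vertices) of `T` onto `E`. -/
def IsBranchDecomp {β E : Type} [Fintype β] (T : SimpleGraph β) (δ : β → E) : Prop :=
  T.IsTree ∧ (∀ v, T.degree v ≤ 3) ∧ Set.BijOn δ {v | T.degree v ≤ 1} Set.univ

/-- The side of the bipartition of `E` induced by the tree edge `{u,v}`:
the labels of the leaves in the component of `u` after deleting the edge. -/
def cutSide {β E : Type} [Fintype β] [Fintype E] [DecidableEq E]
    (T : SimpleGraph β) (δ : β → E) (u v : β) : Finset E :=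
  Finset.univ.filter fun e =>
    ∃ ℓ, T.degree ℓ ≤ 1 ∧ δ ℓ = e ∧ (T.deleteEdges {s(u, v)}).Reachable u ℓ

/-- The set of widths of branch decompositions of `E` with respect to the
edge-set function `q`: the width of a decomposition is the supremum of the
`q`-values of its induced cuts (`sSup ∅ = 0` handles the `|E| ≤ 1` convention). -/
def widthSet {E : Type} [Fintype E] [DecidableEq E] (q : Finset E → ℝ) : Set ℝ :=
  {w | ∃ (β : Type) (_ : Fintype β) (T : SimpleGraph β) (δ : β → E),
        IsBranchDecomp T δ ∧
        w = sSup {x | ∃ u v, T.Adj u v ∧ x = q (cutSide T δ u v)}}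

/-- The branchwidth `𝔅_H(q)` of a symmetric edge-set function `q`. -/
def branchwidth {E : Type} [Fintype E] [DecidableEq E] (q : Finset E → ℝ) : ℝ :=
  sInf (widthSet q)

namespace BranchAux

open SimpleGraph Finset

variable {β : Type} [Fintype β]

/-- The set of vertices on `v`'s side after deleting edge `{u,v}`. -/
def side (T : SimpleGraph β) (u v : β) : Finset β :=
  Finset.univ.filter fun x => (T.deleteEdges {s(u, v)}).Reachable v x

lemma mem_side {T : SimpleGraph β} {u v x : β} :
    x ∈ side T u v ↔ (T.deleteEdges {s(u, v)}).Reachable v x := by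
  simp [side]

lemma mem_side' {T : SimpleGraph β} {u v x : β} :
    x ∈ side T v u ↔ (T.deleteEdges {s(u, v)}).Reachable u x := by
  rw [mem_side, Sym2.eq_swap]

lemma self_mem_side (T : SimpleGraph β) (u v : β) : v ∈ side T u v :=
  mem_side.2 (Reachable.refl v)

lemma side_cover {T : SimpleGraph β} (hc : T.Connected) (u v x : β) :
    x ∈ side T u v ∨ x ∈ side T v u := by
  rw [mem_side, mem_side']
  have key : ∀ (a b : β) (_ : T.Walk a b),
      ((T.deleteEdges {s(u, v)}).Reachable v a ∨ (T.deleteEdges {s(u, v)}).Reachable u a) →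
      ((T.deleteEdges {s(u, v)}).Reachable v b ∨ (T.deleteEdges {s(u, v)}).Reachable u b) := by
    intro a b w
    induction w with
    | nil => exact id
    | @cons a c b h p ih =>
      intro hyp
      apply ih
      by_cases he : s(a, c) = s(u, v)
      · rw [Sym2.eq_iff] at he
        rcases he with ⟨rfl, rfl⟩ | ⟨rfl, rfl⟩
        · exact Or.inl (Reachable.refl _)
        · exact Or.inr (Reachable.refl _)
      · have h' : (T.deleteEdges {s(u, v)}).Adj a c :=
          deleteEdges_adj.mpr ⟨h, by simpa using he⟩
        rcases hyp with hyp | hyp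
        · exact Or.inl (hyp.trans h'.reachable)
        · exact Or.inr (hyp.trans h'.reachable)
  obtain ⟨w⟩ := hc.preconnected v x
  exact key v x w (Or.inl (Reachable.refl _))

lemma side_disjoint {T : SimpleGraph β} (hT : T.IsAcyclic) {u v : β} (hadj : T.Adj u v)
    {x : β} (h1 : x ∈ side T u v) (h2 : x ∈ side T v u) : False := by
  have hr : (T.deleteEdges {s(u, v)}).Reachable u v :=
    (mem_side'.1 h2).trans (mem_side.1 h1).symm
  have hb := (isAcyclic_iff_forall_adj_isBridge.1 hT) hadj
  rw [isBridge_iff] at hb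
  exact hb hr

lemma side_subset {T : SimpleGraph β} (hT : T.IsAcyclic) {u v w : β}
    (hadj : T.Adj u v) (hvw : T.Adj v w) (hwu : w ≠ u) :
    side T v w ⊆ side T u v := by
  intro x hx
  obtain ⟨r⟩ := mem_side.1 hx
  have hTr : ∀ e ∈ r.edges, e ∈ T.edgeSet := by
    intro e he
    have := r.edges_subset_edgeSet he
    rw [edgeSet_deleteEdges] at this
    exact this.1
  have hv : v ∉ (r.transfer T hTr).support := by
    intro hv
    have hv' : v ∈ r.support := by rwa [Walk.support_transfer] at hv
    have hreach : (T.deleteEdges {s(v, w)}).Reachable w v := ⟨r.takeUntil v hv'⟩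
    have hb := (isAcyclic_iff_forall_adj_isBridge.1 hT) hvw
    rw [isBridge_iff] at hb
    exact hb hreach.symm
  have hcons : ∀ e ∈ (Walk.cons hvw (r.transfer T hTr)).edges,
      e ∉ ({s(u, v)} : Set (Sym2 β)) := by
    intro e he
    simp only [Walk.edges_cons, List.mem_cons] at he
    rcases he with rfl | he
    · simp only [Set.mem_singleton_iff]
      intro hEq
      rw [Sym2.eq_iff] at hEq
      rcases hEq with ⟨h1, _⟩ | ⟨_, h2⟩
      · exact hadj.ne' h1
      · exact hwu h2
    · simp only [Set.mem_singleton_iff]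
      rintro rfl
      exact hv ((r.transfer T hTr).snd_mem_support_of_mem_edges he)
  exact mem_side.2 ⟨(Walk.cons hvw (r.transfer T hTr)).toDeleteEdges _ hcons⟩

lemma exists_step {T : SimpleGraph β} {u v x : β}
    (hx : x ∈ side T u v) (hxv : x ≠ v) :
    ∃ w, T.Adj v w ∧ w ≠ u ∧ x ∈ side T v w := by
  obtain ⟨r0⟩ := mem_side.1 hx
  obtain ⟨p, hp⟩ := r0.toPath
  cases p with
  | nil => exact absurd rfl hxv
  | @cons _ c _ h q =>
    have hvc := deleteEdges_adj.1 h
    have hcu : c ≠ u := by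
      rintro rfl
      exact hvc.2 (by rw [Sym2.eq_swap]; exact Set.mem_singleton _)
    refine ⟨c, hvc.1, hcu, ?_⟩
    rw [Walk.cons_isPath_iff] at hp
    have hq : ∀ e ∈ q.edges, e ∈ T.edgeSet := by
      intro e he
      have := q.edges_subset_edgeSet he
      rw [edgeSet_deleteEdges] at this
      exact this.1
    have havoid : ∀ e ∈ (q.transfer T hq).edges, e ∉ ({s(v, c)} : Set (Sym2 β)) := by
      intro e he
      simp only [Set.mem_singleton_iff]
      rintro rfl
      have : v ∈ (q.transfer T hq).support :=
        (q.transfer T hq).fst_mem_support_of_mem_edges he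
      rw [Walk.support_transfer] at this
      exact hp.2 this
    exact mem_side.2 ⟨(q.transfer T hq).toDeleteEdges _ havoid⟩

lemma self_not_mem_side {T : SimpleGraph β} (hT : T.IsAcyclic) {v w : β}
    (hadj : T.Adj v w) : v ∉ side T v w :=
  fun h => side_disjoint hT hadj h (self_mem_side T w v)

lemma sum_side_add_sum_side {T : SimpleGraph β} (hT : T.IsTree) {u v : β} (hadj : T.Adj u v)
    (f : β → ℝ) :
    (∑ x ∈ side T u v, f x) + (∑ x ∈ side T v u, f x) = ∑ x, f x := by
  rw [← Finset.sum_union (Finset.disjoint_left.2 fun x h1 h2 =>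
    side_disjoint hT.IsAcyclic hadj h1 h2)]
  congr 1
  exact Finset.eq_univ_of_forall fun x =>
    Finset.mem_union.2 (side_cover hT.isConnected u v x)

lemma exists_balanced_edge {T : SimpleGraph β} (hT : T.IsTree) (hdeg : ∀ v, T.degree v ≤ 3)
    (f : β → ℝ) (hf0 : ∀ x, 0 ≤ f x) (hfhalf : ∀ x, f x ≤ 1 / 2)
    (htot : ∑ x, f x = 1)
    (hleaf : ∀ x, 2 ≤ T.degree x → f x = 0)
    {a0 b0 : β} (hedge : T.Adj a0 b0) :
    ∃ a b, T.Adj a b ∧ 1 / 3 ≤ ∑ x ∈ side T a b, f x ∧ (∑ x ∈ side T a b, f x) ≤ 2 / 3 := by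
  set W : β → β → ℝ := fun u v => ∑ x ∈ side T u v, f x with hW
  have hpair : ∀ u v, T.Adj u v → W u v + W v u = 1 := fun u v h => by
    rw [hW]; simp only []; rw [sum_side_add_sum_side hT h f, htot]
  by_contra hA
  push_neg at hA
  have hA' : ∀ a b, T.Adj a b → W a b < 1 / 3 ∨ 2 / 3 < W a b := by
    intro a b h
    by_cases h13 : W a b < 1 / 3
    · exact Or.inl h13
    · exact Or.inr (hA a b h (le_of_not_gt h13))
  have claim : ∀ n (u v : β), T.Adj u v → (side T u v).card ≤ n → W u v ≤ 2 / 3 := by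
    intro n
    induction n with
    | zero =>
      intro u v _ hcard
      exact absurd (Finset.card_pos.2 ⟨v, self_mem_side T u v⟩) (by omega)
    | succ n ih =>
      intro u v hadj hcard
      by_cases hcase : ∀ x ∈ side T u v, x = v
      · have hs : side T u v = {v} :=
          Finset.eq_singleton_iff_unique_mem.2 ⟨self_mem_side T u v, hcase⟩
        have : W u v = f v := by rw [hW]; simp only []; rw [hs, Finset.sum_singleton]
        rw [this]
        linarith [hfhalf v]
      · push_neg at hcase
        obtain ⟨x0, hx0, hx0v⟩ := hcase
        obtain ⟨w0, hw0, hw0u, _⟩ := exists_step hx0 hx0v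
        have hdegv : 2 ≤ T.degree v := by
          have hsub2 : ({w0, u} : Finset β) ⊆ T.neighborFinset v := by
            intro y hy
            rcases Finset.mem_insert.1 hy with rfl | hy
            · exact (T.mem_neighborFinset v y).2 hw0
            · rw [Finset.mem_singleton] at hy; subst hy
              exact (T.mem_neighborFinset v y).2 hadj.symm
          calc 2 = ({w0, u} : Finset β).card := (Finset.card_pair hw0u).symm
          _ ≤ (T.neighborFinset v).card := Finset.card_le_card hsub2
          _ = T.degree v := rfl
        have hfv : f v = 0 := hleaf v hdegv
        set N := (T.neighborFinset v).erase u with hN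
        have hvN : ∀ w ∈ N, T.Adj v w ∧ w ≠ u := by
          intro w hw
          rw [hN, Finset.mem_erase, T.mem_neighborFinset] at hw
          exact ⟨hw.2, hw.1⟩
        have hNcard : N.card ≤ 2 := by
          have hu : u ∈ T.neighborFinset v := (T.mem_neighborFinset v u).2 hadj.symm
          have hce := Finset.card_erase_of_mem hu
          rw [← hN] at hce
          have hdv := hdeg v
          unfold SimpleGraph.degree at hdv
          omega
        have hvnot : ∀ w ∈ N, v ∉ side T v w := fun w hw =>
          self_not_mem_side hT.IsAcyclic (hvN w hw).1
        have hsub : side T u v ⊆ (N.biUnion fun w => side T v w) ∪ {v} := by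
          intro x hx
          by_cases hxv : x = v
          · exact Finset.mem_union.2 (Or.inr (by simp [hxv]))
          · obtain ⟨w, hw, hwu, hxw⟩ := exists_step hx hxv
            refine Finset.mem_union.2 (Or.inl (Finset.mem_biUnion.2 ⟨w, ?_, hxw⟩))
            rw [hN, Finset.mem_erase, T.mem_neighborFinset]
            exact ⟨hwu, hw⟩
        have hdisjBU : (N : Set β).PairwiseDisjoint fun w => side T v w := by
          intro w1 hw1 w2 hw2 hne
          simp only [Finset.coe_mem, Finset.mem_coe] at hw1 hw2
          refine Finset.disjoint_left.2 fun x h1 h2 => ?_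
          have hsub1 : side T v w1 ⊆ side T w2 v :=
            side_subset hT.IsAcyclic ((hvN w2 hw2).1.symm) (hvN w1 hw1).1 hne
          exact side_disjoint hT.IsAcyclic ((hvN w2 hw2).1.symm) (hsub1 h1) h2
        have hsmall : ∀ w ∈ N, W v w ≤ 1 / 3 := by
          intro w hw
          obtain ⟨hwadj, hwu⟩ := hvN w hw
          have hss : side T v w ⊂ side T u v := by
            refine Finset.ssubset_iff_of_subset (side_subset hT.IsAcyclic hadj hwadj hwu)
              |>.2 ⟨v, self_mem_side T u v, hvnot w hw⟩
          have hlt : (side T v w).card ≤ n := by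
            have := Finset.card_lt_card hss
            omega
          have hIH := ih v w hwadj hlt
          rcases hA' v w hwadj with h | h
          · linarith
          · linarith
        have hWle : W u v ≤ ∑ w ∈ N, W v w := by
          have h1 : W u v ≤ ∑ x ∈ (N.biUnion fun w => side T v w) ∪ {v}, f x :=
            Finset.sum_le_sum_of_subset_of_nonneg hsub fun x _ _ => hf0 x
          have hvnotBU : v ∉ N.biUnion fun w => side T v w := by
            rw [Finset.mem_biUnion]
            rintro ⟨w, hw, hv⟩
            exact hvnot w hw hv
          have h2 : ∑ x ∈ (N.biUnion fun w => side T v w) ∪ {v}, f x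
              = (∑ x ∈ N.biUnion fun w => side T v w, f x) + f v := by
            rw [Finset.sum_union (by simpa using hvnotBU), Finset.sum_singleton]
          rw [h2, hfv, add_zero, Finset.sum_biUnion hdisjBU] at h1
          exact h1
        calc W u v ≤ ∑ w ∈ N, W v w := hWle
        _ ≤ ∑ _w ∈ N, (1 : ℝ) / 3 := Finset.sum_le_sum hsmall
        _ = N.card * (1 / 3) := by rw [Finset.sum_const, nsmul_eq_mul]
        _ ≤ 2 * (1 / 3) := by
          have : (N.card : ℝ) ≤ 2 := by exact_mod_cast hNcard
          nlinarith
        _ = 2 / 3 := by norm_num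
  have h1 := claim _ a0 b0 hedge le_rfl
  have h2 := claim _ b0 a0 hedge.symm le_rfl
  have h3 := hpair a0 b0 hedge
  rcases hA' a0 b0 hedge with h | h <;> linarith

set_option maxHeartbeats 1000000 in
lemma exists_branchDecomp (E : Type) [Fintype E] [DecidableEq E] (hE : 2 ≤ Fintype.card E) :
    ∃ (β : Type) (_ : Fintype β) (T : SimpleGraph β) (δ : β → E), IsBranchDecomp T δ := by
  classical
  set n := Fintype.card E with hn
  have hn2 : 2 ≤ n := hE
  set P : ℕ → ℕ := fun k => (k - 1) / 2 with hP
  have hPlt : ∀ k : ℕ, k ≠ 0 → P k < k := by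
    intro k hk
    have h1 : k - 1 < k := Nat.sub_lt (Nat.pos_of_ne_zero hk) one_pos
    exact lt_of_le_of_lt (Nat.div_le_self _ _) h1
  have hPle : ∀ k : ℕ, P k ≤ k := fun k =>
    le_trans (Nat.div_le_self _ _) (Nat.sub_le _ _)
  set m : ℕ := 2 * n - 1 with hm
  have hm3 : 3 ≤ m := by omega
  let T : SimpleGraph (Fin m) :=
    { Adj := fun x y => ((x : ℕ) ≠ 0 ∧ P (x : ℕ) = (y : ℕ)) ∨ ((y : ℕ) ≠ 0 ∧ P (y : ℕ) = (x : ℕ))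
      symm := by
        refine ⟨fun x y h => ?_⟩
        tauto
      loopless := by
        refine ⟨fun x h => ?_⟩
        rcases h with ⟨h1, h2⟩ | ⟨h1, h2⟩ <;> exact absurd h2 (Nat.ne_of_lt (hPlt _ h1)) }
  have hAdj : ∀ x y : Fin m, T.Adj x y ↔
      (((x : ℕ) ≠ 0 ∧ P (x : ℕ) = (y : ℕ)) ∨ ((y : ℕ) ≠ 0 ∧ P (y : ℕ) = (x : ℕ))) :=
    fun _ _ => Iff.rfl
  -- connectivity
  have hzlt : (0 : ℕ) < m := by omega
  have hreach : ∀ x : Fin m, T.Reachable ⟨0, hzlt⟩ x := by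
    have key : ∀ k : ℕ, ∀ hk : k < m, T.Reachable ⟨0, hzlt⟩ ⟨k, hk⟩ := by
      intro k
      induction k using Nat.strong_induction_on with
      | _ k ih =>
        intro hk
        rcases Nat.eq_zero_or_pos k with rfl | hkpos
        · exact Reachable.refl _
        · have hPk : P k < m := lt_trans (hPlt k (by omega)) hk
          have hadj : T.Adj ⟨P k, hPk⟩ ⟨k, hk⟩ := Or.inr ⟨by show k ≠ 0; omega, rfl⟩
          exact (ih (P k) (hPlt k (by omega)) hPk).trans hadj.reachable
    intro x
    simpa using key (x : ℕ) x.isLt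
  have hconn : T.Connected := by
    rw [connected_iff]
    exact ⟨fun x y => (hreach x).symm.trans (hreach y), ⟨⟨0, hzlt⟩⟩⟩
  -- iterate bound
  have hIterLe : ∀ (k : ℕ) (x : ℕ), P^[k] x ≤ x := by
    intro k
    induction k with
    | zero => intro x; simp
    | succ k ih =>
      intro x
      rw [Function.iterate_succ_apply]
      exact le_trans (ih (P x)) (hPle x)
  -- acyclicity
  have key : ∀ a b : Fin m, (a : ℕ) ≠ 0 → P (a : ℕ) = (b : ℕ) →
      ¬ (T.deleteEdges {s(a, b)}).Reachable a b := by
    intro a b ha hPab hr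
    set D : Fin m → Prop := fun z => ∃ k : ℕ, P^[k] (z : ℕ) = (a : ℕ) with hD
    have hclosed : ∀ z z' : Fin m, D z → (T.deleteEdges {s(a, b)}).Adj z z' → D z' := by
      intro z z' ⟨k, hk⟩ hzz'
      rw [deleteEdges_adj] at hzz'
      obtain ⟨hTzz', hne⟩ := hzz'
      rcases hTzz' with ⟨h1, h2⟩ | ⟨h1, h2⟩
      · by_cases hza : (z : ℕ) = (a : ℕ)
        · exfalso
          have hzeq : z = a := Fin.ext hza
          have hz'eq : z' = b := Fin.ext (by rw [← h2, hza, hPab])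
          subst hzeq; subst hz'eq
          exact hne rfl
        · rcases k with _ | k'
          · exact absurd hk hza
          · refine ⟨k', ?_⟩
            rw [Function.iterate_succ_apply, h2] at hk
            exact hk
      · refine ⟨k + 1, ?_⟩
        rw [Function.iterate_succ_apply, h2]
        exact hk
    have hwalk : ∀ {x y : Fin m} (_ : (T.deleteEdges {s(a, b)}).Walk x y), D x → D y := by
      intro x y w
      induction w with
      | nil => exact id
      | cons h p ih => exact fun hx => ih (hclosed _ _ hx h)
    obtain ⟨w⟩ := hr
    obtain ⟨k, hk⟩ := hwalk w ⟨0, rfl⟩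
    have h1 : P^[k] (b : ℕ) ≤ (b : ℕ) := hIterLe k _
    have h2 : (b : ℕ) < (a : ℕ) := by rw [← hPab]; exact hPlt _ ha
    omega
  have hac : T.IsAcyclic := by
    rw [isAcyclic_iff_forall_adj_isBridge]
    intro a b hab
    rw [isBridge_iff]
    rcases hab with ⟨h1, h2⟩ | ⟨h1, h2⟩
    · exact key a b h1 h2
    · intro hr
      refine key b a h1 h2 ?_
      rw [Sym2.eq_swap] at hr
      exact hr.symm
  -- degrees
  have hdeg_leaf : ∀ v : Fin m, n - 1 ≤ (v : ℕ) → T.degree v = 1 := by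
    intro v hv
    have hvne : (v : ℕ) ≠ 0 := by omega
    have hPv : P (v : ℕ) < m := lt_trans (hPlt _ hvne) v.isLt
    have : T.neighborFinset v = {⟨P (v : ℕ), hPv⟩} := by
      ext y
      rw [mem_neighborFinset, hAdj, Finset.mem_singleton]
      constructor
      · rintro (⟨h1, h2⟩ | ⟨h1, h2⟩)
        · apply Fin.ext
          simpa using h2.symm
        · exfalso
          have hy := y.isLt
          have : (y : ℕ) = 2 * (v : ℕ) + 1 ∨ (y : ℕ) = 2 * (v : ℕ) + 2 := by
            rw [hP] at h2
            simp only at h2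
            omega
          omega
      · rintro rfl
        exact Or.inl ⟨hvne, rfl⟩
    unfold SimpleGraph.degree
    rw [this, Finset.card_singleton]
  have hdeg_int : ∀ v : Fin m, (v : ℕ) < n - 1 → 2 ≤ T.degree v := by
    intro v hv
    have hc1 : 2 * (v : ℕ) + 1 < m := by omega
    have hc2 : 2 * (v : ℕ) + 2 < m := by omega
    have hA1 : T.Adj v ⟨2 * (v : ℕ) + 1, hc1⟩ := by
      rw [hAdj]
      refine Or.inr ⟨by simp, ?_⟩
      simp only [hP]
      omega
    have hA2 : T.Adj v ⟨2 * (v : ℕ) + 2, hc2⟩ := by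
      rw [hAdj]
      refine Or.inr ⟨by simp, ?_⟩
      simp only [hP]
      omega
    have hsub2 : ({⟨2 * (v : ℕ) + 1, hc1⟩, ⟨2 * (v : ℕ) + 2, hc2⟩} : Finset (Fin m)) ⊆
        T.neighborFinset v := by
      intro y hy
      rcases Finset.mem_insert.1 hy with rfl | hy
      · exact (mem_neighborFinset _ _ _).2 hA1
      · rw [Finset.mem_singleton] at hy
        subst hy
        exact (mem_neighborFinset _ _ _).2 hA2
    have hne12 : (⟨2 * (v : ℕ) + 1, hc1⟩ : Fin m) ≠ ⟨2 * (v : ℕ) + 2, hc2⟩ := by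
      intro h
      rw [Fin.mk.injEq] at h
      omega
    calc 2 = ({⟨2 * (v : ℕ) + 1, hc1⟩, ⟨2 * (v : ℕ) + 2, hc2⟩} : Finset (Fin m)).card :=
          (Finset.card_pair hne12).symm
    _ ≤ (T.neighborFinset v).card := Finset.card_le_card hsub2
    _ = T.degree v := rfl
  have hdeg3 : ∀ v : Fin m, T.degree v ≤ 3 := by
    intro v
    have hsub : T.neighborFinset v ⊆ Finset.univ.filter fun y : Fin m =>
        (y : ℕ) = P (v : ℕ) ∨ (y : ℕ) = 2 * (v : ℕ) + 1 ∨ (y : ℕ) = 2 * (v : ℕ) + 2 := by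
      intro y hy
      rw [mem_neighborFinset, hAdj] at hy
      rw [Finset.mem_filter]
      refine ⟨Finset.mem_univ _, ?_⟩
      rcases hy with ⟨h1, h2⟩ | ⟨h1, h2⟩
      · exact Or.inl h2.symm
      · right
        rw [hP] at h2
        simp only at h2
        omega
    have hfil : (Finset.univ.filter fun y : Fin m =>
        (y : ℕ) = P (v : ℕ) ∨ (y : ℕ) = 2 * (v : ℕ) + 1 ∨ (y : ℕ) = 2 * (v : ℕ) + 2).card ≤
        ({P (v : ℕ), 2 * (v : ℕ) + 1, 2 * (v : ℕ) + 2} : Finset ℕ).card := by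
      refine Finset.card_le_card_of_injOn (fun y : Fin m => (y : ℕ)) ?_ ?_
      · intro y hy
        rw [Finset.mem_coe, Finset.mem_filter] at hy
        simp only [Finset.mem_coe, Finset.mem_insert, Finset.mem_singleton]
        exact hy.2
      · intro y1 _ y2 _ h
        exact Fin.ext h
    have h3 : ({P (v : ℕ), 2 * (v : ℕ) + 1, 2 * (v : ℕ) + 2} : Finset ℕ).card ≤ 3 := by
      apply le_trans (Finset.card_insert_le _ _)
      have := Finset.card_insert_le (2 * (v : ℕ) + 1) ({2 * (v : ℕ) + 2} : Finset ℕ)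
      simp only [Finset.card_singleton] at this
      omega
    have := Finset.card_le_card hsub
    unfold SimpleGraph.degree
    omega
  have hdeg_congr : ∀ (v : Fin m) (i1 i2 : Fintype (T.neighborSet v)),
      @SimpleGraph.degree _ T v i1 = @SimpleGraph.degree _ T v i2 := by
    intro v i1 i2
    cases Subsingleton.elim i1 i2
    rfl
  have hleafiff : ∀ v : Fin m, T.degree v ≤ 1 ↔ n - 1 ≤ (v : ℕ) := by
    intro v
    constructor
    · intro h
      by_contra hc
      have := hdeg_int v (by omega)
      omega
    · intro h
      rw [hdeg_leaf v h]
  have hsetEq : ∀ i : ∀ v : Fin m, Fintype (T.neighborSet v),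
      {v : Fin m | @SimpleGraph.degree _ T v (i v) ≤ 1} = {v : Fin m | n - 1 ≤ (v : ℕ)} := by
    intro i
    ext v
    simp only [Set.mem_setOf_eq]
    rw [hdeg_congr v (i v) _]
    exact hleafiff v
  -- the labelling
  let ε : Fin n ≃ E := (Fintype.equivFin E).symm
  have hsubn : ∀ v : Fin m, (v : ℕ) - (n - 1) < n := by
    intro v
    have := v.isLt
    omega
  have hbijAll : ∀ i : ∀ v : Fin m, Fintype (T.neighborSet v),
      Set.BijOn (fun v : Fin m => ε ⟨(v : ℕ) - (n - 1), hsubn v⟩)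
        {v : Fin m | @SimpleGraph.degree _ T v (i v) ≤ 1} Set.univ := by
    intro i
    have h := hsetEq i
    rw [h]
    refine ⟨fun v _ => Set.mem_univ _, ?_, ?_⟩
    · intro v1 h1 v2 h2 h
      simp only [Set.mem_setOf_eq] at h1 h2
      have := ε.injective h
      rw [Fin.mk.injEq] at this
      exact Fin.ext (by omega)
    · intro e _
      set i : Fin n := ε.symm e with hi
      have hiv : (i : ℕ) + (n - 1) < m := by
        have := i.isLt
        omega
      refine ⟨⟨(i : ℕ) + (n - 1), hiv⟩, by simp only [Set.mem_setOf_eq]; omega, ?_⟩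
      have hfe : (⟨((⟨(i : ℕ) + (n - 1), hiv⟩ : Fin m) : ℕ) - (n - 1), hsubn _⟩ : Fin n) = i := by
        apply Fin.ext
        simp
      show ε ⟨((⟨(i : ℕ) + (n - 1), hiv⟩ : Fin m) : ℕ) - (n - 1), hsubn _⟩ = e
      rw [hfe, hi, Equiv.apply_symm_apply]
  exact ⟨Fin m, inferInstance, T, fun v => ε ⟨(v : ℕ) - (n - 1), hsubn v⟩, ⟨hconn, hac⟩,
    fun v => le_of_eq_of_le (hdeg_congr v _ _) (hdeg3 v), hbijAll (fun v => @Subtype.fintype _ _ (fun a => @SimpleGraph.neighborSet.memDecidable _ T v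
      (fun a b => Classical.propDecidable (T.Adj a b)) a) inferInstance)⟩


lemma sum_leafweight {E : Type} [Fintype E] [DecidableEq E] {β : Type} [Fintype β]
    {T : SimpleGraph β} {δ : β → E}
    (hbij : Set.BijOn δ {v | T.degree v ≤ 1} Set.univ) (ρ : E → ℝ) :
    ∑ x : β, (if T.degree x ≤ 1 then ρ (δ x) else 0) = ∑ e : E, ρ e := by
  rw [← Finset.sum_filter]
  refine Finset.sum_bij (fun x _ => δ x) ?_ ?_ ?_ ?_
  · intros
    exact Finset.mem_univ _
  · intro a ha b hb hab
    exact hbij.injOn (by simpa using (Finset.mem_filter.1 ha).2)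
      (by simpa using (Finset.mem_filter.1 hb).2) hab
  · intro e _
    obtain ⟨x, hx, hxe⟩ := hbij.surjOn (Set.mem_univ e)
    exact ⟨x, Finset.mem_filter.2 ⟨Finset.mem_univ _, hx⟩, hxe⟩
  · intros
    rfl

lemma sum_cutSide {E : Type} [Fintype E] [DecidableEq E] {β : Type} [Fintype β]
    {T : SimpleGraph β} {δ : β → E}
    (hbij : Set.BijOn δ {v | T.degree v ≤ 1} Set.univ) (ρ : E → ℝ) (u v : β) :
    ∑ e ∈ cutSide T δ u v, ρ e
      = ∑ x ∈ side T v u, (if T.degree x ≤ 1 then ρ (δ x) else 0) := by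
  rw [← Finset.sum_filter]
  symm
  refine Finset.sum_bij (fun x _ => δ x) ?_ ?_ ?_ ?_
  · intro a ha
    rw [Finset.mem_filter] at ha
    rw [cutSide, Finset.mem_filter]
    exact ⟨Finset.mem_univ _, a, ha.2, rfl, mem_side'.1 ha.1⟩
  · intro a ha b hb hab
    rw [Finset.mem_filter] at ha hb
    exact hbij.injOn ha.2 hb.2 hab
  · intro e he
    rw [cutSide, Finset.mem_filter] at he
    obtain ⟨_, ℓ, hdeg, hδ, hreach⟩ := he
    exact ⟨ℓ, Finset.mem_filter.2 ⟨mem_side'.2 hreach, hdeg⟩, hδ⟩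
  · intros
    rfl

end BranchAux

/-- if `q` is symmetric, `ρ` is a probability measure on `E` with all
point masses `≤ 1/2`, `φ` is nondecreasing on `[0,1/2]`, and
`q(F) ≥ φ(min(ρ(F), ρ(E∖F)))` for all `F ⊆ E`, then `𝔅_H(q) ≥ φ(1/3)`
(provided `|E| ≥ 2`). -/
theorem branchwidth_ge_of_balanced {E : Type} [Fintype E] [DecidableEq E]
    (hE : 2 ≤ Fintype.card E)
    (q : Finset E → ℝ) (hq0 : ∀ F, 0 ≤ q F) (hqsymm : ∀ F : Finset E, q F = q Fᶜ)
    (ρ : E → ℝ) (hρ0 : ∀ e, 0 ≤ ρ e) (hρ1 : ∑ e, ρ e = 1)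
    (hhalf : ∀ e, ρ e ≤ 1 / 2)
    (φ : ℝ → ℝ) (hφmono : MonotoneOn φ (Set.Icc 0 (1 / 2)))
    (hφ0 : ∀ x ∈ Set.Icc (0 : ℝ) (1 / 2), 0 ≤ φ x)
    (hlb : ∀ F : Finset E, φ (min (∑ e ∈ F, ρ e) (∑ e ∈ Fᶜ, ρ e)) ≤ q F) :
    φ (1 / 3) ≤ branchwidth q := by
  have hmain : ∀ w ∈ widthSet q, φ (1 / 3) ≤ w := by
    rintro w ⟨β, hβ, T, δ, ⟨hTree, hdeg3, hbij⟩, rfl⟩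
    set f : β → ℝ := fun x => if T.degree x ≤ 1 then ρ (δ x) else 0 with hf
    have hf0 : ∀ x, 0 ≤ f x := by
      intro x; rw [hf]; dsimp only; split
      · exact hρ0 _
      · exact le_refl _
    have hfhalf : ∀ x, f x ≤ 1 / 2 := by
      intro x; rw [hf]; dsimp only; split
      · exact hhalf _
      · norm_num
    have htot : ∑ x, f x = 1 := by
      rw [hf]; exact (BranchAux.sum_leafweight hbij ρ).trans hρ1
    have hleaf : ∀ x, 2 ≤ T.degree x → f x = 0 := by
      intro x h; rw [hf]; dsimp only; rw [if_neg (by omega)]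
    obtain ⟨e1, e2, he12⟩ := Fintype.exists_pair_of_one_lt_card
      (by omega : 1 < Fintype.card E)
    obtain ⟨ℓ1, hl1, hδ1⟩ := hbij.surjOn (Set.mem_univ e1)
    obtain ⟨ℓ2, hl2, hδ2⟩ := hbij.surjOn (Set.mem_univ e2)
    have hll : ℓ1 ≠ ℓ2 := fun h => he12 (by rw [← hδ1, ← hδ2, h])
    obtain ⟨p⟩ := hTree.isConnected.preconnected ℓ1 ℓ2
    obtain ⟨a0, b0, hedge⟩ : ∃ a b, T.Adj a b := by
      cases p with
      | nil => exact absurd rfl hll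
      | cons h _ => exact ⟨_, _, h⟩
    obtain ⟨a, b, hab, h13, h23⟩ :=
      BranchAux.exists_balanced_edge hTree hdeg3 f hf0 hfhalf htot hleaf hedge
    have hcut : ∑ e ∈ cutSide T δ a b, ρ e = ∑ x ∈ BranchAux.side T b a, f x :=
      BranchAux.sum_cutSide hbij ρ a b
    have hpair : (∑ x ∈ BranchAux.side T a b, f x) + (∑ x ∈ BranchAux.side T b a, f x) = 1 := by
      rw [BranchAux.sum_side_add_sum_side hTree hab f, htot]
    have htotcut := Finset.sum_add_sum_compl (cutSide T δ a b) ρ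
    rw [hρ1] at htotcut
    have hcompl : ∑ e ∈ (cutSide T δ a b)ᶜ, ρ e = ∑ x ∈ BranchAux.side T a b, f x := by
      linarith
    have hmin1 : 1 / 3 ≤ min (∑ e ∈ cutSide T δ a b, ρ e) (∑ e ∈ (cutSide T δ a b)ᶜ, ρ e) := by
      apply le_min
      · rw [hcut]; linarith
      · rw [hcompl]; linarith
    have hmin2 : min (∑ e ∈ cutSide T δ a b, ρ e) (∑ e ∈ (cutSide T δ a b)ᶜ, ρ e) ≤ 1 / 2 := by
      rcases le_total (∑ e ∈ cutSide T δ a b, ρ e) (∑ e ∈ (cutSide T δ a b)ᶜ, ρ e) with h | h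
      · rw [min_eq_left h]; linarith
      · rw [min_eq_right h]; linarith
    have hφ13 : φ (1 / 3) ≤ φ (min (∑ e ∈ cutSide T δ a b, ρ e) (∑ e ∈ (cutSide T δ a b)ᶜ, ρ e)) :=
      hφmono ⟨by norm_num, by norm_num⟩ ⟨by linarith, hmin2⟩ hmin1
    have hq := hlb (cutSide T δ a b)
    have hmem : q (cutSide T δ a b) ∈ {x | ∃ u v, T.Adj u v ∧ x = q (cutSide T δ u v)} :=
      ⟨a, b, hab, rfl⟩
    have hbdd : BddAbove {x | ∃ u v, T.Adj u v ∧ x = q (cutSide T δ u v)} := by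
      have hsub : {x | ∃ u v, T.Adj u v ∧ x = q (cutSide T δ u v)} ⊆
          Set.range fun p : β × β => q (cutSide T δ p.1 p.2) := by
        rintro x ⟨u, v, _, rfl⟩
        exact ⟨(u, v), rfl⟩
      exact ((Set.finite_range _).bddAbove).mono hsub
    calc φ (1 / 3)
        ≤ φ (min (∑ e ∈ cutSide T δ a b, ρ e) (∑ e ∈ (cutSide T δ a b)ᶜ, ρ e)) := hφ13
      _ ≤ q (cutSide T δ a b) := hq
      _ ≤ sSup {x | ∃ u v, T.Adj u v ∧ x = q (cutSide T δ u v)} := le_csSup hbdd hmem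
  have hne : (widthSet q).Nonempty := by
    obtain ⟨β, hFin, T, δ, hBD⟩ := BranchAux.exists_branchDecomp E hE
    exact ⟨_, ⟨β, hFin, T, δ, hBD, rfl⟩⟩
  exact le_csInf hne hmain

end
end

section
/- Let N be a finite index set, let K ⊆ (ℝ≥0)^N be nonempty and compact, and let K↓ := { x ∈ (ℝ≥0)^N : ∃ u ∈ K with x ≤ u pointwise } be its downward closure. Let Φ : (ℝ≥0)^N → ℝ≥0 be monotone and positively homogeneous of degree 1. Then sup_{u ∈ K} Φ(u) = sup_{x ∈ (ℝ≥0)^N} Φ(x) / γ_{K↓}(x), where γ_{K↓}(x) := inf{ α ≥ 0 : x ∈ α·K↓ } is the gauge of K↓ (with conventions 0/0 := 0 and a/∞ := 0). -/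
set_option maxHeartbeats 800000
set_option synthInstance.maxHeartbeats 200000


open scoped ENNReal Pointwise

private lemma aux_le_sInf_mul {A : Set ℝ≥0∞} {b c : ℝ≥0∞} (hb : b ≠ ∞)
    (h : ∀ α ∈ A, c ≤ α * b) (hA : A.Nonempty) : c ≤ sInf A * b := by
  rcases eq_or_ne b 0 with rfl | hb0
  · obtain ⟨α, hα⟩ := hA
    simpa using h α hα
  · have h1 : ∀ α ∈ A, c / b ≤ α := fun α hα =>
      (ENNReal.div_le_iff hb0 hb).2 (h α hα)
    have h2 : c / b ≤ sInf A := le_sInf h1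
    exact (ENNReal.div_le_iff hb0 hb).1 h2

/-- for a nonempty compact `K ⊆ (ℝ≥0)^N` with downward closure `K↓`,
and `Φ : (ℝ≥0)^N → ℝ≥0` monotone and positively homogeneous of degree 1,
`sup_{u ∈ K} Φ(u) = sup_x Φ(x) / γ_{K↓}(x)` where `γ_{K↓}` is the gauge of `K↓`
(computed in `ℝ≥0∞`; the `ℝ≥0∞` conventions `0/0 = 0` and `a/∞ = 0` apply). -/
theorem gauge_variational {N : Type*} [Fintype N]
    (K : Set (N → NNReal)) (hne : K.Nonempty) (hcomp : IsCompact K)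
    (Φ : (N → NNReal) → NNReal)
    (hmono : ∀ x y : N → NNReal, x ≤ y → Φ x ≤ Φ y)
    (hhom : ∀ (a : NNReal) (x : N → NNReal), Φ (a • x) = a * Φ x) :
    (⨆ u ∈ K, (Φ u : ℝ≥0∞)) =
      ⨆ x : N → NNReal,
        (Φ x : ℝ≥0∞) /
          sInf {α : ℝ≥0∞ | ∃ a : NNReal, α = (a : ℝ≥0∞) ∧
            x ∈ a • {y : N → NNReal | ∃ u ∈ K, y ≤ u}} := by
  classical
  set D : Set (N → NNReal) := {y : N → NNReal | ∃ u ∈ K, y ≤ u} with hD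
  set S : ℝ≥0∞ := ⨆ u ∈ K, (Φ u : ℝ≥0∞) with hS
  -- a pointwise bound for K
  have hM : ∀ i : N, ∃ m : NNReal, ∀ u ∈ K, u i ≤ m := by
    intro i
    obtain ⟨u, hu, hmax⟩ := hcomp.exists_isMaxOn hne (continuous_apply i).continuousOn
    exact ⟨u i, hmax⟩
  choose M hMle using hM
  have hSC : S ≤ (Φ M : ℝ≥0∞) := by
    refine iSup₂_le fun u hu => ?_
    exact_mod_cast hmono u M (fun i => hMle i u hu)
  have hStop : S ≠ ∞ := fun h => by simp [h] at hSC
  apply le_antisymm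
  · refine iSup₂_le fun u hu => ?_
    refine le_trans ?_ (le_iSup _ u)
    have h1 : sInf {α : ℝ≥0∞ | ∃ a : NNReal, α = (a : ℝ≥0∞) ∧ u ∈ a • D} ≤ 1 := by
      refine sInf_le ⟨1, by norm_num, ?_⟩
      exact Set.mem_smul_set.2 ⟨u, ⟨u, hu, le_refl u⟩, one_smul NNReal u⟩
    calc (Φ u : ℝ≥0∞) = (Φ u : ℝ≥0∞) / 1 := (div_one _).symm
      _ ≤ _ := ENNReal.div_le_div_left h1 _
  · refine iSup_le fun x => ?_
    set A : Set ℝ≥0∞ := {α : ℝ≥0∞ | ∃ a : NNReal, α = (a : ℝ≥0∞) ∧ x ∈ a • D} with hA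
    have key : ∀ α ∈ A, (Φ x : ℝ≥0∞) ≤ α * S := by
      rintro α ⟨a, rfl, hx⟩
      obtain ⟨y, hyD, rfl⟩ := hx
      obtain ⟨u, hu, hyu⟩ := hyD
      have h1 : (Φ (a • y) : ℝ≥0∞) = (a : ℝ≥0∞) * (Φ y : ℝ≥0∞) := by
        rw [hhom a y]; push_cast; ring
      rw [h1]
      gcongr
      exact le_trans (by exact_mod_cast hmono y u hyu) (le_iSup₂ (f := fun u _ => (Φ u : ℝ≥0∞)) u hu)
    rcases eq_or_ne (sInf A) ∞ with h | h
    · rw [h, ENNReal.div_top]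
      exact zero_le
    have hAne : A.Nonempty := by
      rw [Set.nonempty_iff_ne_empty]
      intro hemp
      exact h (by simp [hemp])
    have hle : (Φ x : ℝ≥0∞) ≤ sInf A * S := aux_le_sInf_mul hStop key hAne
    rcases eq_or_ne (sInf A) 0 with h0 | h0
    · have : (Φ x : ℝ≥0∞) = 0 := le_antisymm (by simpa [h0] using hle) (zero_le)
      rw [this, ENNReal.zero_div]
      exact zero_le
    · rw [ENNReal.div_le_iff h0 h]
      exact hle.trans_eq (mul_comm _ _)
end

section
/- Let K ⊆ (ℝ≥0)^d be nonempty, compact, convex, and coordinatewise downward closed (x ∈ K and 0 ≤ y ≤ x implies y ∈ K). Define the antiblocker abl(K) := { w ∈ (ℝ≥0)^d : ⟨q,w⟩ ≤ 1 for all q ∈ K }. Then for every q ∈ (ℝ≥0)^d, the gauge γ_K(q) := inf{α ≥ 0 : q ∈ α·K} satisfies γ_K(q) = sup_{w ∈ abl(K)} ⟨q,w⟩, where the right-hand side may be +∞. -/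
open scoped ENNReal Pointwise

/-- for a nonempty compact convex coordinatewise downward closed
`K ⊆ (ℝ≥0)^d`, the gauge of any nonnegative `q` equals the supremum of `⟨q,w⟩`
over the antiblocker `abl(K) = { w ≥ 0 : ⟨q',w⟩ ≤ 1 ∀ q' ∈ K }` (possibly `+∞`,
computed in `ℝ≥0∞`). -/
theorem gauge_eq_antiblocker_sup {d : ℕ}
    (K : Set (Fin d → ℝ)) (hKnn : ∀ x ∈ K, ∀ i, 0 ≤ x i)
    (hne : K.Nonempty) (hcomp : IsCompact K) (hconv : Convex ℝ K)
    (hdown : ∀ x ∈ K, ∀ y : Fin d → ℝ, (∀ i, 0 ≤ y i) → y ≤ x → y ∈ K)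
    (q : Fin d → ℝ) (hq : ∀ i, 0 ≤ q i) :
    sInf {α : ℝ≥0∞ | ∃ a : NNReal, α = (a : ℝ≥0∞) ∧ q ∈ (a : ℝ) • K} =
      ⨆ w ∈ {w : Fin d → ℝ | (∀ i, 0 ≤ w i) ∧ ∀ z ∈ K, ∑ i, z i * w i ≤ 1},
        ENNReal.ofReal (∑ i, q i * w i) := by
  obtain ⟨x0, hx0⟩ := hne
  have h0K : (0 : Fin d → ℝ) ∈ K := by
    refine hdown x0 hx0 0 (fun i => le_rfl) (fun i => hKnn x0 hx0 i)
  apply le_antisymm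
  · -- sInf ≤ sup
    refine ENNReal.le_of_forall_nnreal_lt ?_
    intro β hβ
    rcases eq_or_lt_of_le (zero_le : (0 : NNReal) ≤ β) with hβ0 | hβ0
    · simp [← hβ0]
    have hβR : (0 : ℝ) < β := hβ0
    -- q is not in β • K
    have hqnot : q ∉ (β : ℝ) • K := by
      intro h
      have hmem : (β : ℝ≥0∞) ∈ {α : ℝ≥0∞ | ∃ a : NNReal, α = (a : ℝ≥0∞) ∧ q ∈ (a : ℝ) • K} :=
        ⟨β, rfl, h⟩
      exact absurd (sInf_le hmem) (not_le.2 hβ)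
    -- separate
    obtain ⟨f, u, hfa, hfq⟩ :=
      geometric_hahn_banach_closed_point (hconv.smul (β : ℝ))
        ((hcomp.smul (β : ℝ)).isClosed) hqnot
    set y : Fin d → ℝ := fun i => f (Pi.single i 1) with hy
    have hf : ∀ x : Fin d → ℝ, f x = ∑ i, x i * y i := by
      intro x
      conv_lhs => rw [← Finset.univ_sum_single x]
      rw [map_sum]
      refine Finset.sum_congr rfl fun i _ => ?_
      have h1 : (Pi.single i (x i) : Fin d → ℝ) = x i • (Pi.single i (1 : ℝ) : Fin d → ℝ) := by
        rw [← Pi.single_smul]; simp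
      rw [h1, map_smul, smul_eq_mul]
    have hupos : (0 : ℝ) < u := by
      have := hfa ((β : ℝ) • 0) (Set.smul_mem_smul_set h0K)
      simpa [hf] using this
    set y' : Fin d → ℝ := fun i => max (y i) 0 with hy'
    have hy'nn : ∀ i, 0 ≤ y' i := fun i => le_max_right _ _
    -- key: for z ∈ K, β * ⟨z, y'⟩ < u
    have hKy' : ∀ z ∈ K, (β : ℝ) * ∑ i, z i * y' i < u := by
      intro z hz
      set z' : Fin d → ℝ := fun i => if 0 ≤ y i then z i else 0 with hz'
      have hz'K : z' ∈ K := by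
        refine hdown z hz z' (fun i => ?_) (fun i => ?_)
        · by_cases h : 0 ≤ y i <;> simp [hz', h, hKnn z hz i]
        · by_cases h : 0 ≤ y i <;> simp [hz', h, hKnn z hz i]
      have := hfa ((β : ℝ) • z') (Set.smul_mem_smul_set hz'K)
      rw [hf] at this
      have hsum : ∑ i, ((β : ℝ) • z') i * y i = (β : ℝ) * ∑ i, z i * y' i := by
        rw [Finset.mul_sum]
        refine Finset.sum_congr rfl fun i _ => ?_
        by_cases h : 0 ≤ y i
        · simp [hz', hy', h, max_eq_left h]; ring
        · simp [hz', hy', h, max_eq_right (le_of_lt (lt_of_not_ge h))]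
      rwa [hsum] at this
    have hqy' : u < ∑ i, q i * y' i := by
      have h1 : u < ∑ i, q i * y i := by rw [← hf]; exact hfq
      refine lt_of_lt_of_le h1 (Finset.sum_le_sum fun i _ => ?_)
      exact mul_le_mul_of_nonneg_left (le_max_left _ _) (hq i)
    -- the witness
    set w : Fin d → ℝ := fun i => ((β : ℝ) / u) * y' i with hw
    have hwmem : w ∈ {w : Fin d → ℝ | (∀ i, 0 ≤ w i) ∧ ∀ z ∈ K, ∑ i, z i * w i ≤ 1} := by
      constructor
      · intro i
        exact mul_nonneg (div_nonneg hβR.le hupos.le) (hy'nn i)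
      · intro z hz
        have hsum : ∑ i, z i * w i = ((β : ℝ) * ∑ i, z i * y' i) / u := by
          rw [Finset.mul_sum, Finset.sum_div]
          exact Finset.sum_congr rfl fun i _ => by simp only [hw]; ring
        rw [hsum, div_le_one hupos]
        exact (hKy' z hz).le
    have hqw : (β : ℝ) ≤ ∑ i, q i * w i := by
      have hsum : ∑ i, q i * w i = ((β : ℝ) * ∑ i, q i * y' i) / u := by
        rw [Finset.mul_sum, Finset.sum_div]
        exact Finset.sum_congr rfl fun i _ => by simp only [hw]; ring
      rw [hsum, le_div_iff₀ hupos]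
      have := mul_le_mul_of_nonneg_left hqy'.le hβR.le
      linarith [this]
    calc (β : ℝ≥0∞) = ENNReal.ofReal (β : ℝ) := ENNReal.ofReal_coe_nnreal.symm
      _ ≤ ENNReal.ofReal (∑ i, q i * w i) := ENNReal.ofReal_le_ofReal hqw
      _ ≤ _ := le_iSup₂ (f := fun w _ => ENNReal.ofReal (∑ i, q i * w i)) w hwmem
  · -- sup ≤ sInf
    refine le_sInf ?_
    rintro α ⟨a, rfl, hqa⟩
    refine iSup₂_le fun w hw => ?_
    obtain ⟨z, hz, rfl⟩ := hqa
    have hsum : ∑ i, ((a : ℝ) • z) i * w i = (a : ℝ) * ∑ i, z i * w i := by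
      rw [Finset.mul_sum]
      exact Finset.sum_congr rfl fun i _ => by simp [mul_assoc]
    calc ENNReal.ofReal (∑ i, ((a : ℝ) • z) i * w i)
        ≤ ENNReal.ofReal (a : ℝ) := by
          refine ENNReal.ofReal_le_ofReal ?_
          rw [hsum]
          calc (a : ℝ) * ∑ i, z i * w i ≤ (a : ℝ) * 1 :=
                mul_le_mul_of_nonneg_left (hw.2 z hz) a.2
            _ = (a : ℝ) := mul_one _
      _ = (a : ℝ≥0∞) := ENNReal.ofReal_coe_nnreal
end

section
/- Let G be a spanning subgraph of the r-dimensional hypercube Q_r (r ≥ 2) obtained by deleting fewer than 2^(r−2) edges. Then G has a connected component of size greater than 2^(r−1). -/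
/-- The `r`-dimensional hypercube graph on `{0,1}^r`: two vertices are adjacent
iff they differ in exactly one coordinate. -/
def cubeGraph (r : ℕ) : SimpleGraph (Fin r → Bool) :=
  SimpleGraph.fromRel fun x y => (Finset.univ.filter fun i => x i ≠ y i).card = 1

namespace CubeDel
variable {r : ℕ}

def flip (i : Fin r) (w : Fin r → Bool) : Fin r → Bool := Function.update w i (!w i)

lemma flip_self (i : Fin r) (w) : flip i w i = !w i := by simp [flip]
lemma flip_ne' (i j : Fin r) (w) (h : j ≠ i) : flip i w j = w j := by simp [flip, h]

lemma flip_flip (i : Fin r) (w) : flip i (flip i w) = w := by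
  funext j
  by_cases h : j = i
  · subst h; simp [flip]
  · simp [flip, h]

lemma flip_ne (i : Fin r) (w) : flip i w ≠ w := by
  intro h
  have := congrFun h i
  simp [flip] at this

lemma adj_flip (i : Fin r) (w) : (cubeGraph r).Adj w (flip i w) := by
  rw [cubeGraph, SimpleGraph.fromRel_adj]
  refine ⟨(flip_ne i w).symm, Or.inl ?_⟩
  have : (Finset.univ.filter fun j => w j ≠ flip i w j) = {i} := by
    ext j
    simp only [Finset.mem_filter, Finset.mem_univ, true_and, Finset.mem_singleton]
    by_cases h : j = i
    · subst h; simp [flip]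
    · simp [flip, h]
  rw [this, Finset.card_singleton]

lemma card_coord (i : Fin r) (b : Bool) :
    (Finset.univ.filter fun z : Fin r → Bool => z i = b).card = 2 ^ (r - 1) := by
  have hbij : (Finset.univ.filter fun z : Fin r → Bool => z i = b).card
      = (Finset.univ.filter fun z : Fin r → Bool => z i = !b).card := by
    apply Finset.card_bij' (fun z _ => flip i z) (fun z _ => flip i z)
    · intro z hz
      simp only [Finset.mem_filter, Finset.mem_univ, true_and] at hz ⊢
      simp [flip_self, hz]
    · intro z hz
      simp only [Finset.mem_filter, Finset.mem_univ, true_and] at hz ⊢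
      simp [flip_self, hz]
    · intro z _; exact flip_flip i z
    · intro z _; exact flip_flip i z
  have hsplit : (Finset.univ.filter fun z : Fin r → Bool => z i = b).card
      + (Finset.univ.filter fun z : Fin r → Bool => z i = !b).card
      = Fintype.card (Fin r → Bool) := by
    rw [← Finset.card_univ]
    have h2 : (Finset.univ.filter fun z : Fin r → Bool => z i = !b)
        = Finset.univ.filter fun z : Fin r → Bool => ¬ (z i = b) := by
      apply Finset.filter_congr
      intro z _
      cases b <;> cases hz : z i <;> simp
    rw [h2, Finset.card_filter_add_card_filter_not]
  have hcard : Fintype.card (Fin r → Bool) = 2 ^ r := by simp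
  have hr : 1 ≤ r := i.pos
  have h2r : 2 ^ r = 2 ^ (r - 1) + 2 ^ (r - 1) := by
    have h := Nat.sub_add_cancel hr
    calc 2 ^ r = 2 ^ ((r-1)+1) := by rw [h]
    _ = 2 ^ (r-1) + 2 ^ (r-1) := by rw [pow_succ]; ring
  rw [← hbij, hcard, h2r] at hsplit
  linarith



def pth (u v : Fin r → Bool) (k : ℕ) : Fin r → Bool :=
  fun j => if (j : ℕ) < k then v j else u j

lemma pth_zero (u v : Fin r → Bool) : pth u v 0 = u := by
  funext j; simp [pth]

lemma pth_top (u v : Fin r → Bool) : pth u v r = v := by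
  funext j; simp [pth, j.isLt]

def cross (X : Finset (Fin r → Bool)) (u v : Fin r → Bool) : ℕ :=
  Nat.find (p := fun k => pth u v (k+1) ∉ X ∨ r ≤ k) ⟨r, Or.inr le_rfl⟩

section
variable {X : Finset (Fin r → Bool)} {u v : Fin r → Bool}

lemma r_pos (hu : u ∈ X) (hv : v ∉ X) : 1 ≤ r := by
  rcases Nat.eq_zero_or_pos r with h | h
  · exfalso
    apply hv
    have : v = u := by funext j; exact absurd j.isLt (by omega)
    rwa [this]
  · exact h

lemma cross_lt (hu : u ∈ X) (hv : v ∉ X) : cross X u v < r := by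
  have hr := r_pos hu hv
  have : cross X u v ≤ r - 1 := by
    apply Nat.find_le
    left
    rw [Nat.sub_add_cancel hr, pth_top]
    exact hv
  omega

lemma pth_cross_succ_not_mem (hu : u ∈ X) (hv : v ∉ X) : pth u v (cross X u v + 1) ∉ X := by
  have h : pth u v (cross X u v + 1) ∉ X ∨ r ≤ cross X u v :=
    Nat.find_spec (p := fun k => pth u v (k+1) ∉ X ∨ r ≤ k) ⟨r, Or.inr le_rfl⟩
  rcases h with h | h
  · exact h
  · exact absurd (cross_lt hu hv) (by omega)

lemma pth_cross_mem (hu : u ∈ X) (hv : v ∉ X) : pth u v (cross X u v) ∈ X := by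
  rcases Nat.eq_zero_or_pos (cross X u v) with h | h
  · rw [h, pth_zero]; exact hu
  · have hm : cross X u v - 1 < cross X u v := by omega
    have h0 : ¬(pth u v ((cross X u v - 1) + 1) ∉ X ∨ r ≤ cross X u v - 1) :=
      Nat.find_min (p := fun k => pth u v (k+1) ∉ X ∨ r ≤ k) ⟨r, Or.inr le_rfl⟩ hm
    rw [not_or] at h0
    have h1 := h0.1
    rw [Nat.sub_add_cancel h] at h1
    simpa using h1
end


lemma bool_ne_iff {a b : Bool} (h : a ≠ b) : (!a) = b := by
  revert h; cases a <;> cases b <;> decide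

section
variable {X : Finset (Fin r → Bool)} {u v : Fin r → Bool}

lemma ne_at_cross (hu : u ∈ X) (hv : v ∉ X) :
    u ⟨cross X u v, cross_lt hu hv⟩ ≠ v ⟨cross X u v, cross_lt hu hv⟩ := by
  intro h
  apply pth_cross_succ_not_mem hu hv
  have heq : pth u v (cross X u v + 1) = pth u v (cross X u v) := by
    funext j
    simp only [pth]
    by_cases hj : (j : ℕ) = cross X u v
    · have hj' : j = ⟨cross X u v, cross_lt hu hv⟩ := Fin.ext hj
      subst hj'
      rw [if_pos (by omega), if_neg (by omega), ← h]
    · by_cases hlt : (j : ℕ) < cross X u v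
      · rw [if_pos (by omega), if_pos hlt]
      · rw [if_neg (by omega), if_neg hlt]
  rw [heq]
  exact pth_cross_mem hu hv

lemma flip_pth (hu : u ∈ X) (hv : v ∉ X) :
    flip ⟨cross X u v, cross_lt hu hv⟩ (pth u v (cross X u v)) = pth u v (cross X u v + 1) := by
  set c := cross X u v with hc
  set i : Fin r := ⟨c, cross_lt hu hv⟩ with hi
  funext j
  by_cases hj : j = i
  · subst hj
    have h1 : pth u v c i = u i := by simp [pth, hi]
    have h2 : pth u v (c+1) i = v i := by simp [pth, hi]
    rw [flip, Function.update_self, h1, h2]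
    exact bool_ne_iff (ne_at_cross hu hv)
  · rw [flip, Function.update_of_ne hj]
    have hj' : (j : ℕ) ≠ c := fun h => hj (Fin.ext (by simp [hi, h]))
    simp only [pth]
    by_cases hlt : (j : ℕ) < c
    · rw [if_pos hlt, if_pos (by omega)]
    · rw [if_neg hlt, if_neg (by omega)]

end

lemma key_count (hr : 1 ≤ r) (X : Finset (Fin r → Bool)) :
    X.card * ((Finset.univ : Finset (Fin r → Bool)) \ X).card ≤
      (Finset.univ.filter fun p : (Fin r → Bool) × Fin r =>
        p.1 ∈ X ∧ flip p.2 p.1 ∉ X).card * 2 ^ (r - 1) := by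
  classical
  set D := Finset.univ.filter fun p : (Fin r → Bool) × Fin r =>
    p.1 ∈ X ∧ flip p.2 p.1 ∉ X with hD
  set B := (D ×ˢ (Finset.univ : Finset (Fin r → Bool))).filter
      (fun q => q.2 q.1.2 = !(q.1.1 q.1.2)) with hB
  have step1 : (X ×ˢ ((Finset.univ : Finset (Fin r → Bool)) \ X)).card ≤ B.card := by
    apply Finset.card_le_card_of_injOn
      (fun uv => ((pth uv.1 uv.2 (cross X uv.1 uv.2),
        if h : cross X uv.1 uv.2 < r then (⟨cross X uv.1 uv.2, h⟩ : Fin r) else ⟨0, hr⟩),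
        fun j : Fin r => if (j:ℕ) < cross X uv.1 uv.2 then uv.1 j else uv.2 j))
    · rintro ⟨u, v⟩ huv
      rw [Finset.mem_coe, Finset.mem_product, Finset.mem_sdiff] at huv
      obtain ⟨hu, -, hv⟩ := huv
      have hclt : cross X u v < r := cross_lt hu hv
      dsimp only
      set c := cross X u v with hc
      simp only [dif_pos hclt]
      rw [hB, Finset.mem_coe, Finset.mem_filter, Finset.mem_product]
      refine ⟨⟨?_, Finset.mem_univ _⟩, ?_⟩
      · rw [hD, Finset.mem_filter]
        refine ⟨Finset.mem_univ _, pth_cross_mem hu hv, ?_⟩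
        rw [flip_pth hu hv]
        exact pth_cross_succ_not_mem hu hv
      · show (if (c : ℕ) < c then u _ else v _) = !(pth u v c ⟨c, hclt⟩)
        rw [if_neg (by omega)]
        have h1 : pth u v c ⟨c, hclt⟩ = u ⟨c, hclt⟩ := by simp [pth]
        rw [h1]
        exact (bool_ne_iff (ne_at_cross hu hv)).symm
    · rintro ⟨u, v⟩ huv ⟨u', v'⟩ huv' heq
      simp only [Finset.coe_product, Set.mem_prod, Finset.mem_coe, Finset.mem_sdiff] at huv huv'
      obtain ⟨hu, -, hv⟩ := huv
      obtain ⟨hu', -, hv'⟩ := huv'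
      have hclt := cross_lt hu hv
      have hclt' := cross_lt hu' hv'
      simp only [Prod.mk.injEq, dif_pos hclt, dif_pos hclt'] at heq
      obtain ⟨⟨hw, hi⟩, hz⟩ := heq
      have hcc : cross X u v = cross X u' v' := by
        have := congrArg Fin.val hi
        simpa using this
      rw [← hcc] at hw hz
      set c := cross X u v with hc
      have hufun : u = u' := by
        funext j
        by_cases hlt : (j : ℕ) < c
        · have := congrFun hz j
          rwa [if_pos hlt, if_pos hlt] at this
        · have := congrFun hw j
          simp only [pth] at this
          rwa [if_neg hlt, if_neg hlt] at this
      have hvfun : v = v' := by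
        funext j
        by_cases hlt : (j : ℕ) < c
        · have := congrFun hw j
          simp only [pth] at this
          rwa [if_pos hlt, if_pos hlt] at this
        · by_cases hje : (j : ℕ) = c
          · have hj' : j = ⟨c, hclt⟩ := Fin.ext hje
            subst hj'
            have e1 : v ⟨c, hclt⟩ = !(u ⟨c, hclt⟩) := (bool_ne_iff (ne_at_cross hu hv)).symm
            have e2 : v' ⟨c, hclt⟩ = !(u' ⟨c, hclt⟩) := by
              have e2' := (bool_ne_iff (ne_at_cross hu' hv')).symm
              have hfin : (⟨cross X u' v', hclt'⟩ : Fin r) = ⟨c, hclt⟩ :=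
                Fin.ext (by simp [← hcc])
              rwa [hfin] at e2'
            rw [e1, e2, hufun]
          · have := congrFun hz j
            rwa [if_neg hlt, if_neg hlt] at this
      rw [hufun, hvfun]
  have step2 : B.card ≤ D.card * 2 ^ (r - 1) := by
    have hfib : ∀ q ∈ B, q.1 ∈ D := by
      intro q hq
      rw [hB, Finset.mem_filter, Finset.mem_product] at hq
      exact hq.1.1
    rw [Finset.card_eq_sum_card_fiberwise hfib]
    have hbound : ∀ p ∈ D, (B.filter fun q => q.1 = p).card ≤ 2 ^ (r - 1) := by
      intro p _
      rw [← card_coord p.2 (!(p.1 p.2))]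
      apply Finset.card_le_card_of_injOn (fun q => q.2)
      · intro q hq
        rw [Finset.mem_coe, Finset.mem_filter] at hq
        obtain ⟨hq1, hq2⟩ := hq
        rw [hB, Finset.mem_filter] at hq1
        rw [Finset.mem_coe, Finset.mem_filter]
        refine ⟨Finset.mem_univ _, ?_⟩
        have := hq1.2
        rw [hq2] at this
        exact this
      · intro q hq q' hq' hqq
        rw [Finset.coe_filter, Set.mem_setOf_eq] at hq hq'
        exact Prod.ext (hq.2.trans hq'.2.symm) hqq
    calc ∑ p ∈ D, (B.filter fun q => q.1 = p).card
        ≤ ∑ _p ∈ D, 2 ^ (r - 1) := Finset.sum_le_sum hbound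
      _ = D.card * 2 ^ (r - 1) := by rw [Finset.sum_const, smul_eq_mul]
  calc X.card * ((Finset.univ : Finset (Fin r → Bool)) \ X).card
      = (X ×ˢ ((Finset.univ : Finset (Fin r → Bool)) \ X)).card := (Finset.card_product _ _).symm
    _ ≤ B.card := step1
    _ ≤ D.card * 2 ^ (r - 1) := step2



lemma closed_reach {G : SimpleGraph (Fin r → Bool)} {Y : Finset (Fin r → Bool)}
    (hcl : ∀ u w, u ∈ Y → G.Adj u w → w ∈ Y) {a b : Fin r → Bool}
    (p : G.Walk a b) (ha : a ∈ Y) : b ∈ Y := by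
  revert ha
  induction p with
  | nil => exact id
  | cons h q ih => intro ha; exact ih (hcl _ _ ha h)

lemma D_le_deleted {G : SimpleGraph (Fin r → Bool)} (hsub : G ≤ cubeGraph r)
    (X : Finset (Fin r → Bool)) (hcl : ∀ u w, u ∈ X → G.Adj u w → w ∈ X) :
    (Finset.univ.filter fun p : (Fin r → Bool) × Fin r =>
      p.1 ∈ X ∧ flip p.2 p.1 ∉ X).card ≤ ((cubeGraph r).edgeSet \ G.edgeSet).ncard := by
  classical
  set D := Finset.univ.filter fun p : (Fin r → Bool) × Fin r =>
    p.1 ∈ X ∧ flip p.2 p.1 ∉ X with hD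
  have hinj : Set.InjOn (fun p : (Fin r → Bool) × Fin r => s(p.1, flip p.2 p.1)) D := by
    intro p hp q hq heq
    rw [Finset.mem_coe, hD, Finset.mem_filter] at hp hq
    simp only [Sym2.eq_iff] at heq
    rcases heq with ⟨h1, h2⟩ | ⟨h1, h2⟩
    · have hcoord : p.2 = q.2 := by
        by_contra hne
        have hc := congrFun h2 p.2
        rw [flip_self, h1, flip_ne' q.2 p.2 q.1 hne, ← h1] at hc
        exact absurd hc (by cases p.1 p.2 <;> decide)
      exact Prod.ext h1 hcoord
    · exact absurd (by rw [← h1]; exact hp.2.1) hq.2.2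
  have h1 : D.card = (D.image fun p : (Fin r → Bool) × Fin r => s(p.1, flip p.2 p.1)).card :=
    (Finset.card_image_of_injOn hinj).symm
  rw [h1, ← Set.ncard_coe_finset]
  apply Set.ncard_le_ncard ?_ (Set.toFinite _)
  intro e he
  rw [Finset.coe_image, Set.mem_image] at he
  obtain ⟨p, hp, rfl⟩ := he
  rw [Finset.mem_coe, hD, Finset.mem_filter] at hp
  constructor
  · rw [SimpleGraph.mem_edgeSet]
    exact adj_flip p.2 p.1
  · intro hmem
    rw [SimpleGraph.mem_edgeSet] at hmem
    exact hp.2.2 (hcl _ _ hp.2.1 hmem)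

end CubeDel

set_option maxHeartbeats 1000000 in
open CubeDel in
/-- a spanning subgraph `G` of `Q_r` (`r ≥ 2`) obtained by deleting
fewer than `2^(r−2)` edges has a connected component of size greater than
`2^(r−1)`. -/
theorem cube_deletion_large_component (r : ℕ) (hr : 2 ≤ r)
    (G : SimpleGraph (Fin r → Bool)) (hsub : G ≤ cubeGraph r)
    (hdel : ((cubeGraph r).edgeSet \ G.edgeSet).ncard < 2 ^ (r - 2)) :
    ∃ v, 2 ^ (r - 1) < ({u | G.Reachable v u} : Set (Fin r → Bool)).ncard := by
  classical
  by_contra hcon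
  push_neg at hcon
  have hcomp : ∀ v, (Finset.univ.filter fun u => G.Reachable v u).card ≤ 2 ^ (r - 1) := by
    intro v
    have h := hcon v
    rwa [Set.ncard_eq_toFinset_card', Set.toFinset_setOf] at h
  have p1 : 2 ^ (r - 1) = 2 ^ (r - 2) + 2 ^ (r - 2) := by
    have h : r - 1 = (r - 2) + 1 := by omega
    rw [h, pow_succ]; ring
  have p2 : 2 ^ r = 2 ^ (r - 1) + 2 ^ (r - 1) := by
    have h : r = (r - 1) + 1 := by omega
    conv_lhs => rw [h]
    rw [pow_succ]; ring
  set Cand := Finset.univ.filter (fun Y : Finset (Fin r → Bool) =>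
      (∀ u w, u ∈ Y → G.Adj u w → w ∈ Y) ∧ 2 ^ (r - 2) ≤ Y.card) with hCand
  have hne : Cand.Nonempty := by
    refine ⟨Finset.univ, ?_⟩
    rw [hCand, Finset.mem_filter]
    refine ⟨Finset.mem_univ _, fun u w _ _ => Finset.mem_univ _, ?_⟩
    rw [Finset.card_univ]
    have : Fintype.card (Fin r → Bool) = 2 ^ r := by simp
    rw [this]
    exact Nat.pow_le_pow_right (by norm_num) (by omega)
  obtain ⟨X, hXmem, hmin⟩ := Finset.exists_min_image Cand Finset.card hne
  rw [hCand, Finset.mem_filter] at hXmem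
  obtain ⟨-, hXcl, hXlb⟩ := hXmem
  have hXub : X.card ≤ 2 ^ (r - 1) := by
    by_contra hbig
    push_neg at hbig
    have hXne : X.Nonempty := Finset.card_pos.mp (lt_of_lt_of_le (by positivity) hXlb)
    obtain ⟨v, hvX⟩ := hXne
    set C := Finset.univ.filter (fun u => G.Reachable v u) with hC
    have hCsub : C ⊆ X := by
      intro u hu
      rw [hC, Finset.mem_filter] at hu
      obtain ⟨p⟩ := hu.2
      exact closed_reach hXcl p hvX
    have hvC : v ∈ C := by
      rw [hC, Finset.mem_filter]
      exact ⟨Finset.mem_univ _, SimpleGraph.Reachable.refl v⟩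
    have hCcl : ∀ u w, u ∈ C → G.Adj u w → w ∈ C := by
      intro u w hu hadj
      rw [hC, Finset.mem_filter] at hu ⊢
      exact ⟨Finset.mem_univ _, hu.2.trans hadj.reachable⟩
    by_cases hsmall : 2 ^ (r - 2) ≤ C.card
    · have hCmem : C ∈ Cand := by
        rw [hCand, Finset.mem_filter]
        exact ⟨Finset.mem_univ _, hCcl, hsmall⟩
      have h1 := hmin C hCmem
      have h2 := hcomp v
      rw [← hC] at h2
      omega
    · push_neg at hsmall
      have hX'cl : ∀ u w, u ∈ X \ C → G.Adj u w → w ∈ X \ C := by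
        intro u w hu hadj
        rw [Finset.mem_sdiff] at hu ⊢
        refine ⟨hXcl _ _ hu.1 hadj, fun hwC => hu.2 ?_⟩
        exact hCcl _ _ hwC hadj.symm
      have hcardX' : (X \ C).card = X.card - C.card := Finset.card_sdiff_of_subset hCsub
      have hX'mem : X \ C ∈ Cand := by
        rw [hCand, Finset.mem_filter]
        refine ⟨Finset.mem_univ _, hX'cl, ?_⟩
        rw [hcardX']
        omega
      have h1 := hmin _ hX'mem
      rw [hcardX'] at h1
      have hCpos : 1 ≤ C.card := Finset.card_pos.mpr ⟨v, hvC⟩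
      have hCle : C.card ≤ X.card := Finset.card_le_card hCsub
      omega
  have hge : 2 ^ (r - 1) ≤ ((Finset.univ : Finset (Fin r → Bool)) \ X).card := by
    rw [Finset.card_sdiff_of_subset (Finset.subset_univ X), Finset.card_univ]
    have : Fintype.card (Fin r → Bool) = 2 ^ r := by simp
    rw [this]
    omega
  have h1 := key_count (r := r) (by omega) X
  have h2 := D_le_deleted hsub X hXcl
  have hd : (Finset.univ.filter fun p : (Fin r → Bool) × Fin r =>
      p.1 ∈ X ∧ CubeDel.flip p.2 p.1 ∉ X).card < 2 ^ (r - 2) := lt_of_le_of_lt h2 hdel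
  have hlhs : 2 ^ (r - 2) * 2 ^ (r - 1) ≤
      X.card * ((Finset.univ : Finset (Fin r → Bool)) \ X).card := Nat.mul_le_mul hXlb hge
  have hrhs : (Finset.univ.filter fun p : (Fin r → Bool) × Fin r =>
      p.1 ∈ X ∧ CubeDel.flip p.2 p.1 ∉ X).card * 2 ^ (r - 1) < 2 ^ (r - 2) * 2 ^ (r - 1) :=
    Nat.mul_lt_mul_of_lt_of_le hd le_rfl (by positivity)
  exact absurd (hlhs.trans (h1.trans hrhs.le)) (by omega)
end
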